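/- Let Λ be an associative ring of prime characteristic p and Λ₁ a subset generating Λ as a ring. If D ∈ Λ₁ and D^{[p]} ∈ Λ satisfies ad(D^{[p]})(E) = ad(D)^p(E) for all E ∈ Λ₁, then ι(D) = D^p − D^{[p]} lies in the center of Λ. -/

import Mathlib

lemma mulLeft_pow_end {Λ : Type*} [Ring Λ] (D : Λ) (n : ℕ) (L : AddMonoid.End Λ)
    (hLdef : L = AddMonoidHom.mulLeft D) : L ^ n = AddMonoidHom.mulLeft (D ^ n) := by
  subst hLdef
  induction n with
  | zero =>
    apply AddMonoidHom.ext; intro x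
    show x = D ^ 0 * x
    rw [pow_zero, one_mul]
  | succ n ih =>
    apply AddMonoidHom.ext; intro x
    rw [pow_succ]
    refine (DFunLike.congr_fun ih (D * x)).trans ?_
    show D ^ n * (D * x) = D ^ n * D * x
    rw [← mul_assoc]

lemma mulRight_pow_end {Λ : Type*} [Ring Λ] (D : Λ) (n : ℕ) (R : AddMonoid.End Λ)
    (hRdef : R = AddMonoidHom.mulRight D) : R ^ n = AddMonoidHom.mulRight (D ^ n) := by
  subst hRdef
  induction n with
  | zero =>
    apply AddMonoidHom.ext; intro x
    show x = x * D ^ 0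
    rw [pow_zero, mul_one]
  | succ n ih =>
    apply AddMonoidHom.ext; intro x
    rw [pow_succ]
    refine (DFunLike.congr_fun ih (x * D)).trans ?_
    show (x * D) * D ^ n = x * (D ^ n * D)
    rw [mul_assoc, ← pow_succ', ← pow_succ]

lemma charP_addMonoidEnd (p : ℕ) (Λ : Type*) [Ring Λ] [CharP Λ p] :
    CharP (AddMonoid.End Λ) p := by
  constructor
  intro n
  rw [← CharP.cast_eq_zero_iff Λ p]
  constructor
  · intro h
    have := DFunLike.congr_fun h (1:Λ)
    simpa using this
  · intro h
    apply AddMonoidHom.ext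
    intro x
    show (n : AddMonoid.End Λ) x = 0
    rw [AddMonoid.End.natCast_apply, nsmul_eq_mul, h, zero_mul]

/-- Let `Λ` be an associative unital ring of prime characteristic `p` and `Λ₁` a subset
generating `Λ` as a ring. If `D ∈ Λ₁` and `Dp ∈ Λ` satisfies
`ad(Dp)(E) = ad(D)^p(E)` for all `E ∈ Λ₁`, then `ι(D) = D^p − Dp` lies in the
center of `Λ`. -/
theorem stmt7 (p : ℕ) [Fact p.Prime] (Λ : Type*) [Ring Λ] [CharP Λ p]
    (Λ₁ : Set Λ) (hgen : Subring.closure Λ₁ = ⊤)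
    (D : Λ) (hD : D ∈ Λ₁) (Dp : Λ)
    (hDp : ∀ E ∈ Λ₁, Dp * E - E * Dp = (fun x => D * x - x * D)^[p] E) :
    D ^ p - Dp ∈ Subring.center Λ := by
  haveI : CharP (AddMonoid.End Λ) p := charP_addMonoidEnd p Λ
  set c := D ^ p - Dp with hc
  set L : AddMonoid.End Λ := AddMonoidHom.mulLeft D with hL
  set R : AddMonoid.End Λ := AddMonoidHom.mulRight D with hR
  -- Jacobson's identity: ad(D)^p = ad(D^p)
  have hcomm : Commute L R := by
    apply AddMonoidHom.ext
    intro x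
    show D * (x * D) = (D * x) * D
    rw [mul_assoc]
  have hpow : (L - R) ^ p
      = (AddMonoidHom.mulLeft (D ^ p) : AddMonoid.End Λ) - AddMonoidHom.mulRight (D ^ p) := by
    rw [sub_pow_char_of_commute p hcomm, mulLeft_pow_end D p L hL, mulRight_pow_end D p R hR]
    rfl
  -- so for every generator E, c commutes with E
  have key : ∀ E ∈ Λ₁, c * E = E * c := by
    intro E hE
    have h1 : (fun x => D * x - x * D)^[p] E = ((L - R) ^ p) E := by
      rw [AddMonoid.End.coe_pow]
      congr 1
    have h2 := hDp E hE
    rw [h1, hpow] at h2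
    have h3 : Dp * E - E * Dp = D ^ p * E - E * D ^ p := h2
    rw [hc, sub_mul, mul_sub]
    have h4 := sub_eq_sub_iff_sub_eq_sub.mp h3
    have h5 := congrArg Neg.neg h4
    simpa [neg_sub] using h5
  -- extend to all of Λ by closure induction
  rw [Subring.mem_center_iff]
  intro g
  have hg : g ∈ Subring.closure Λ₁ := by rw [hgen]; trivial
  induction hg using Subring.closure_induction with
  | mem x hx => exact (key x hx).symm
  | one => simp
  | zero => simp
  | add x y _ _ hx hy => rw [add_mul, mul_add, hx, hy]
  | neg x _ hx => rw [neg_mul, mul_neg, hx]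
  | mul x y _ _ hx hy => rw [mul_assoc, hy, ← mul_assoc, hx, mul_assoc]
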